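/- Let g : X → X be a continuous selfmap of a compact metric space and let Ω(g) be its nonwandering set. Then h(g) = h(g restricted to Ω(g)). -/

import Mathlib

/-- The set of nonwandering points of `g`: points all of whose neighborhoods
return to themselves under some positive iterate of `g`. -/
def nonWanderingSet {X : Type*} [TopologicalSpace X] (g : X → X) : Set X :=
  {x | ∀ U ∈ nhds x, ∃ n, 1 ≤ n ∧ (g^[n] '' U ∩ U).Nonempty}

open Dynamics Set UniformSpace Uniformity Filter
open scoped Classical ENNReal

namespace NWEntropy

variable {X : Type*}

/-- Greedy sequence of times: advance by `n₀` when inside `V`, by `1` otherwise. -/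
noncomputable def gTimes (g : X → X) (V : Set X) (n₀ : ℕ) (x : X) : ℕ → ℕ
  | 0 => 0
  | k + 1 => gTimes g V n₀ x k + (if g^[gTimes g V n₀ x k] x ∈ V then n₀ else 1)

variable {g : X → X} {V : Set X} {n₀ : ℕ} {x : X}

lemma gTimes_zero : gTimes g V n₀ x 0 = 0 := rfl

lemma gTimes_succ (k : ℕ) :
    gTimes g V n₀ x (k + 1)
      = gTimes g V n₀ x k + (if g^[gTimes g V n₀ x k] x ∈ V then n₀ else 1) := rfl

lemma gTimes_lt_succ (hn₀ : 1 ≤ n₀) (k : ℕ) :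
    gTimes g V n₀ x k < gTimes g V n₀ x (k + 1) := by
  rw [gTimes_succ]
  have : 1 ≤ (if g^[gTimes g V n₀ x k] x ∈ V then n₀ else 1) := by
    split <;> omega
  omega

lemma gTimes_strictMono (hn₀ : 1 ≤ n₀) : StrictMono (gTimes g V n₀ x) :=
  strictMono_nat_of_lt_succ (gTimes_lt_succ hn₀)

lemma le_gTimes (hn₀ : 1 ≤ n₀) (k : ℕ) : k ≤ gTimes g V n₀ x k := by
  induction k with
  | zero => simp [gTimes_zero]
  | succ k ih => have := gTimes_lt_succ (g := g) (V := V) (x := x) hn₀ k; omega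

lemma exists_gTimes_block (hn₀ : 1 ≤ n₀) (i : ℕ) :
    ∃ k, gTimes g V n₀ x k ≤ i ∧ i < gTimes g V n₀ x (k + 1) := by
  have hex : ∃ k, i < gTimes g V n₀ x (k + 1) :=
    ⟨i, lt_of_lt_of_le (Nat.lt_succ_self i) (le_gTimes hn₀ (i + 1))⟩
  refine ⟨Nat.find hex, ?_, Nat.find_spec hex⟩
  rcases Nat.eq_zero_or_pos (Nat.find hex) with h0 | h0
  · rw [h0, gTimes_zero]; omega
  · have := Nat.find_min hex (m := Nat.find hex - 1) (by omega)
    push_neg at this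
    calc gTimes g V n₀ x (Nat.find hex) = gTimes g V n₀ x (Nat.find hex - 1 + 1) := by
          congr 1; omega
      _ ≤ i := this

lemma gTimes_eq_sum (k : ℕ) :
    gTimes g V n₀ x k
      = ∑ j ∈ Finset.range k, (if g^[gTimes g V n₀ x j] x ∈ V then n₀ else 1) := by
  induction k with
  | zero => simp [gTimes_zero]
  | succ k ih => rw [Finset.sum_range_succ, ← ih, gTimes_succ]

/-- If the orbit of `x` leaves `V` at most `q` times before time `N`, then the greedy
time sequence reaches `N` within `N / n₀ + q + 1` steps. -/
lemma le_gTimes_of_visits (hn₀ : 1 ≤ n₀) {N q : ℕ}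
    (hvisit : ((Finset.range N).filter fun t => g^[t] x ∉ V).card ≤ q) :
    N ≤ gTimes g V n₀ x (N / n₀ + q + 1) := by
  set B := N / n₀ + q + 1 with hB
  by_contra hc
  push_neg at hc
  have htlt : ∀ j ≤ B, gTimes g V n₀ x j < N := fun j hj =>
    lt_of_le_of_lt ((gTimes_strictMono (g := g) (V := V) (x := x) hn₀).monotone hj) hc
  set P : ℕ → Prop := fun j => g^[gTimes g V n₀ x j] x ∈ V with hP
  have hsum := gTimes_eq_sum (g := g) (V := V) (n₀ := n₀) (x := x) B
  rw [← Finset.sum_filter_add_sum_filter_not (Finset.range B) P] at hsum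
  have h1 : ∑ j ∈ (Finset.range B).filter P, (if P j then n₀ else 1)
      = n₀ * ((Finset.range B).filter P).card := by
    rw [Finset.sum_ite_of_true (by intro j hj; exact (Finset.mem_filter.1 hj).2)]
    simp [mul_comm]
  have h2 : ∑ j ∈ (Finset.range B).filter (fun j => ¬ P j), (if P j then n₀ else 1)
      = ((Finset.range B).filter (fun j => ¬ P j)).card := by
    rw [Finset.sum_ite_of_false (by intro j hj; exact (Finset.mem_filter.1 hj).2)]
    simp
  have hinj : ((Finset.range B).filter (fun j => ¬ P j)).card
      ≤ ((Finset.range N).filter fun t => g^[t] x ∉ V).card := by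
    apply Finset.card_le_card_of_injOn (fun j => gTimes g V n₀ x j)
    · intro j hj
      rw [Finset.mem_coe, Finset.mem_filter] at hj ⊢
      rw [Finset.mem_range] at hj
      exact ⟨Finset.mem_range.2 (htlt j hj.1.le), hj.2⟩
    · intro a _ b _ hab
      exact (gTimes_strictMono (g := g) (V := V) (x := x) hn₀).injective hab
  have hcards : ((Finset.range B).filter P).card
      + ((Finset.range B).filter (fun j => ¬ P j)).card = B := by
    rw [Finset.card_filter_add_card_filter_not, Finset.card_range]
  have hblocks : N / n₀ + 1 ≤ ((Finset.range B).filter P).card := by omega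
  have hbig : n₀ * (N / n₀ + 1) ≤ gTimes g V n₀ x B := by
    rw [hsum, h1, h2]
    have := Nat.mul_le_mul_left n₀ hblocks
    omega
  have hNlt : N < n₀ * (N / n₀ + 1) := by
    have h := Nat.div_add_mod N n₀
    have h2 : N % n₀ < n₀ := Nat.mod_lt N (by omega)
    calc N = n₀ * (N / n₀) + N % n₀ := h.symm
      _ < n₀ * (N / n₀) + n₀ := by omega
      _ = n₀ * (N / n₀ + 1) := by ring
  omega


section Combinatorics
variable {X : Type*}

/-- The key combinatorial construction: a dynamical cover of the whole space out of a
dynamical cover of a "core" set `V` together with wandering sets covering its complement. -/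
lemma exists_dynCover_of_wandering [Nonempty X] (g : X → X) {U U₂ : Set (X × X)} {n₀ q : ℕ}
    (hn₀ : 1 ≤ n₀) (E : Finset X) (W : Fin q → Set X)
    (hUU : ∀ a b c : X, (a, b) ∈ U → (a, c) ∈ U → (b, c) ∈ U₂)
    (hWU : ∀ (i : Fin q) (a b : X), a ∈ W i → b ∈ W i → (a, b) ∈ U₂)
    (hW : ∀ z : X, z ∉ ⋃ y ∈ E, ball y (dynEntourage g U n₀) → ∃ i, z ∈ W i)
    (hWwander : ∀ (i : Fin q) (x : X) (t t' : ℕ), t < t' → g^[t] x ∈ W i → g^[t'] x ∉ W i)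
    (N : ℕ) :
    ∃ s : Finset X, IsDynCoverOf g univ U₂ N s ∧
      s.card ≤ (N + 1) ^ q * (q + 1) ^ q * (E.card + 1) ^ (N / n₀ + q + 1) := by
  set D := dynEntourage g U n₀ with hD
  set V := ⋃ y ∈ E, ball y D with hV
  set r := E.card with hr
  set B := N / n₀ + q + 1 with hB
  -- visits outside V are at most q
  have hvisit : ∀ x : X, ((Finset.range N).filter fun τ => g^[τ] x ∉ V).card ≤ q := by
    intro x
    rcases Nat.eq_zero_or_pos q with hq | hq
    · have : ((Finset.range N).filter fun τ => g^[τ] x ∉ V) = ∅ := by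
        rw [Finset.filter_eq_empty_iff]
        intro τ _ hτ
        exact (hq ▸ (hW _ hτ).choose).elim0
      simp [this]
    · have : Nonempty (Fin q) := ⟨⟨0, hq⟩⟩
      set f : ℕ → Fin q := fun τ =>
        if h : ∃ i, g^[τ] x ∈ W i then h.choose else Classical.arbitrary _ with hf
      have hfmem : ∀ τ, g^[τ] x ∉ V → g^[τ] x ∈ W (f τ) := by
        intro τ hτ
        have h : ∃ i, g^[τ] x ∈ W i := hW _ hτ
        rw [hf]; simp only [dif_pos h]; exact h.choose_spec
      have := Finset.card_le_card_of_injOn f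
        (s := (Finset.range N).filter fun τ => g^[τ] x ∉ V) (t := Finset.univ)
        (fun τ _ => Finset.mem_univ _) ?_
      · simpa using this
      · intro a ha b hb hab
        rw [Finset.mem_coe, Finset.mem_filter] at ha hb
        by_contra hne
        rcases Nat.lt_or_ge a b with hlt | hge
        · exact hWwander (f a) x a b hlt (hfmem a ha.2) (hab ▸ hfmem b hb.2)
        · have hlt : b < a := by omega
          exact hWwander (f b) x b a hlt (hfmem b hb.2) (hab.symm ▸ hfmem a ha.2)
  -- wandering labels
  obtain ⟨φ, hφ⟩ : ∃ φ : X → Fin (q + 1), ∀ z, z ∉ V → ∃ i : Fin q,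
      φ z = i.castSucc ∧ z ∈ W i := by
    refine ⟨fun z => if h : ∃ i : Fin q, z ∈ W i then h.choose.castSucc else Fin.last q,
      fun z hz => ?_⟩
    have h : ∃ i : Fin q, z ∈ W i := hW z hz
    exact ⟨h.choose, by simp only [dif_pos h], h.choose_spec⟩
  -- block labels
  obtain ⟨ψ, hψ⟩ : ∃ ψ : X → Fin (r + 1), ∀ z, z ∈ V → ∃ j : Fin r,
      ψ z = j.castSucc ∧ z ∈ ball ((E.equivFin.symm j : X)) D := by
    refine ⟨fun z => if h : ∃ j : Fin r, z ∈ ball ((E.equivFin.symm j : X)) D then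
      h.choose.castSucc else Fin.last r, fun z hz => ?_⟩
    have h : ∃ j : Fin r, z ∈ ball ((E.equivFin.symm j : X)) D := by
      rw [hV, mem_iUnion₂] at hz
      obtain ⟨y', hy', hball⟩ := hz
      exact ⟨E.equivFin ⟨y', hy'⟩, by simpa using hball⟩
    exact ⟨h.choose, by simp only [dif_pos h], h.choose_spec⟩
  -- the finset of "single step" times
  obtain ⟨S, hSmem⟩ : ∃ S : X → Finset ℕ, ∀ x τ, τ ∈ S x ↔
      (τ < N ∧ (∃ k, gTimes g V n₀ x k = τ) ∧ g^[τ] x ∉ V) := by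
    refine ⟨fun x => (Finset.range N).filter
      fun τ => (∃ k, gTimes g V n₀ x k = τ) ∧ g^[τ] x ∉ V, fun x τ => ?_⟩
    simp [Finset.mem_filter, Finset.mem_range, and_assoc]
  have hScard : ∀ x, (S x).card ≤ q := by
    intro x
    refine le_trans (Finset.card_le_card ?_) (hvisit x)
    intro τ hτ
    rw [hSmem] at hτ
    rw [Finset.mem_filter, Finset.mem_range]
    exact ⟨hτ.1, hτ.2.2⟩
  -- encoding of `S x` as a padded tuple
  obtain ⟨enc, hchar⟩ : ∃ enc : X → Fin q → Fin (N + 1), ∀ x τ,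
      τ ∈ S x ↔ ∃ k : Fin q, ((enc x k : ℕ) = τ ∧ τ < N) := by
    refine ⟨fun x k => if h : (k : ℕ) < (S x).card then
      ⟨(S x).orderEmbOfFin rfl ⟨k, h⟩, ?_⟩ else Fin.last N, fun x τ => ?_⟩
    · have hmem := Finset.orderEmbOfFin_mem (S x) rfl ⟨(k : ℕ), h⟩
      rw [hSmem] at hmem
      omega
    · constructor
      · intro hτ
        have hτ' : τ ∈ Set.range ((S x).orderEmbOfFin rfl) := by
          rw [Finset.range_orderEmbOfFin]; exact hτ
        obtain ⟨j, hj⟩ := hτ'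
        refine ⟨⟨(j : ℕ), lt_of_lt_of_le j.isLt (hScard x)⟩, ?_, ?_⟩
        · simp only [dif_pos j.isLt]
          rw [← hj]
        · rw [hSmem] at hτ; exact hτ.1
      · rintro ⟨k, hval, hτN⟩
        by_cases h : (k : ℕ) < (S x).card
        · simp only [dif_pos h] at hval
          have hmem := Finset.orderEmbOfFin_mem (S x) rfl ⟨(k : ℕ), h⟩
          rwa [show ((S x).orderEmbOfFin rfl ⟨(k : ℕ), h⟩ : ℕ) = τ from hval] at hmem
        · simp only [dif_neg h] at hval
          simp at hval
          omega
  have hSeq : ∀ x x', enc x = enc x' → S x = S x' := by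
    intro x x' he
    ext τ
    rw [hchar, hchar, he]
  -- equal S's give equal greedy times (below N)
  have htEq : ∀ x x', S x = S x' → ∀ k,
      gTimes g V n₀ x k = gTimes g V n₀ x' k ∨
        (N ≤ gTimes g V n₀ x k ∧ N ≤ gTimes g V n₀ x' k) := by
    intro x x' hSe k
    induction k with
    | zero => left; rw [gTimes_zero, gTimes_zero]
    | succ k ih =>
      rcases ih with heq | ⟨h1, h2⟩
      · by_cases hτN : gTimes g V n₀ x k < N
        · left
          set τ := gTimes g V n₀ x k with hτ
          have hmix : g^[τ] x ∈ V ↔ g^[τ] x' ∈ V := by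
            have e1 : τ ∈ S x ↔ g^[τ] x ∉ V := by
              rw [hSmem]
              exact ⟨fun h => h.2.2, fun h => ⟨hτN, ⟨k, rfl⟩, h⟩⟩
            have e2 : τ ∈ S x' ↔ g^[τ] x' ∉ V := by
              rw [hSmem]
              exact ⟨fun h => h.2.2, fun h => ⟨hτN, ⟨k, heq.symm⟩, h⟩⟩
            rw [hSe] at e1
            rw [e2] at e1
            tauto
          rw [gTimes_succ, gTimes_succ, ← heq, ← hτ]
          congr 1
          simp only [hmix]
        · right
          push_neg at hτN
          constructor
          · exact le_trans hτN (le_of_lt (gTimes_lt_succ hn₀ k))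
          · exact le_trans (heq ▸ hτN) (le_of_lt (gTimes_lt_succ hn₀ k))
      · right
        exact ⟨le_trans h1 (le_of_lt (gTimes_lt_succ hn₀ k)),
          le_trans h2 (le_of_lt (gTimes_lt_succ hn₀ k))⟩
  -- the full code
  set code : X → (Fin q → Fin (N + 1)) × (Fin q → Fin (q + 1)) × (Fin B → Fin (r + 1)) :=
    fun x => (enc x, fun k => φ (g^[(enc x k : ℕ)] x),
      fun k => if gTimes g V n₀ x k < N then ψ (g^[gTimes g V n₀ x k] x) else Fin.last r)
    with hcodedef
  have key : ∀ x x', code x = code x' → (x, x') ∈ dynEntourage g U₂ N := by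
    intro x x' hcode
    rw [mem_dynEntourage]
    intro i hi
    have hencEq : enc x = enc x' := congrArg Prod.fst hcode
    have hSe := hSeq x x' hencEq
    obtain ⟨k, hk1, hk2⟩ := exists_gTimes_block (g := g) (V := V) (x := x) hn₀ i
    set τ := gTimes g V n₀ x k with hτ
    have hτN : τ < N := lt_of_le_of_lt hk1 hi
    have hkx : gTimes g V n₀ x' k = τ := by
      rcases htEq x x' hSe k with h | ⟨h, _⟩
      · exact h.symm
      · omega
    by_cases hτS : τ ∈ S x
    · -- single step
      have hxV : g^[τ] x ∉ V := ((hSmem x τ).1 hτS).2.2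
      have hx'V : g^[τ] x' ∉ V := ((hSmem x' τ).1 (hSe ▸ hτS)).2.2
      have hieq : i = τ := by
        have : gTimes g V n₀ x (k + 1) = τ + 1 := by
          rw [gTimes_succ, ← hτ, if_neg hxV]
        omega
      obtain ⟨k', hk', _⟩ := (hchar x τ).1 hτS
      have hwEq : φ (g^[(enc x k' : ℕ)] x) = φ (g^[(enc x' k' : ℕ)] x') :=
        congrFun (congrArg Prod.fst (congrArg Prod.snd hcode)) k'
      have hk'' : ((enc x' k' : ℕ)) = τ := by rw [← hencEq]; exact hk'
      rw [hk', hk''] at hwEq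
      obtain ⟨i1, e1, m1⟩ := hφ _ hxV
      obtain ⟨i2, e2, m2⟩ := hφ _ hx'V
      have hi12 : i1 = i2 := by
        have : i1.castSucc = i2.castSucc := by rw [← e1, ← e2, hwEq]
        exact Fin.castSucc_injective _ this
      rw [hieq]
      exact hWU i1 _ _ m1 (hi12 ▸ m2)
    · -- block step
      have hxV : g^[τ] x ∈ V := by
        by_contra hc
        exact hτS ((hSmem x τ).2 ⟨hτN, ⟨k, rfl⟩, hc⟩)
      have hx'V : g^[τ] x' ∈ V := by
        by_contra hc
        exact hτS (hSe ▸ (hSmem x' τ).2 ⟨hτN, ⟨k, hkx⟩, hc⟩)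
      have hkB : k < B := by
        have hNB := le_gTimes_of_visits (g := g) (x := x) hn₀ (hvisit x)
        rw [← hB] at hNB
        by_contra hc
        push_neg at hc
        have := (gTimes_strictMono (g := g) (V := V) (x := x) hn₀).monotone hc
        omega
      have hbEq := congrFun (congrArg Prod.snd (congrArg Prod.snd hcode)) ⟨k, hkB⟩
      simp only [hcodedef, ← hτ, hkx, if_pos hτN] at hbEq
      obtain ⟨j1, e1, b1⟩ := hψ _ hxV
      obtain ⟨j2, e2, b2⟩ := hψ _ hx'V
      have hj : j1 = j2 := by
        have : j1.castSucc = j2.castSucc := by rw [← e1, ← e2, hbEq]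
        exact Fin.castSucc_injective _ this
      simp only [ball, mem_preimage, hD, mem_dynEntourage] at b1 b2
      have hiτ : i - τ < n₀ := by
        have : gTimes g V n₀ x (k + 1) = τ + n₀ := by
          rw [gTimes_succ, ← hτ, if_pos hxV]
        omega
      have c1 := b1 (i - τ) hiτ
      have c2 := (hj ▸ b2) (i - τ) hiτ
      rw [← Function.iterate_add_apply, Nat.sub_add_cancel hk1] at c1 c2
      exact hUU _ _ _ c1 c2
  -- representatives
  set rep : ((Fin q → Fin (N + 1)) × (Fin q → Fin (q + 1)) × (Fin B → Fin (r + 1))) → X :=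
    fun c => if h : ∃ x, code x = c then h.choose else Classical.arbitrary X with hrep
  refine ⟨Finset.image rep Finset.univ, ?_, ?_⟩
  · intro x _
    refine ⟨rep (code x), Finset.mem_coe.2 (Finset.mem_image.2 ⟨code x, Finset.mem_univ _, rfl⟩), ?_⟩
    have h : ∃ z, code z = code x := ⟨x, rfl⟩
    have : code (rep (code x)) = code x := by
      rw [hrep]; simp only [dif_pos h]; exact h.choose_spec
    exact key _ _ this.symm
  · calc (Finset.image rep Finset.univ).card ≤ Finset.univ.card := Finset.card_image_le
      _ = (N + 1) ^ q * (q + 1) ^ q * (r + 1) ^ B := by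
        simp [Fintype.card_fun]
        ring

end Combinatorics

lemma isClosed_nonWanderingSet [TopologicalSpace X] (g : X → X) :
    IsClosed (nonWanderingSet g) := by
  rw [← isOpen_compl_iff, isOpen_iff_mem_nhds]
  intro z hz
  have hz' : ¬ ∀ U ∈ nhds z, ∃ n, 1 ≤ n ∧ (g^[n] '' U ∩ U).Nonempty := hz
  push_neg at hz'
  obtain ⟨U, hU, hn⟩ := hz'
  refine Filter.mem_of_superset (interior_mem_nhds.2 hU) ?_
  intro w hw
  intro hwΩ
  obtain ⟨n, hn1, hne⟩ := hwΩ U (Filter.mem_of_superset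
    ((isOpen_interior.mem_nhds hw)) interior_subset)
  rw [hn n hn1] at hne
  exact Set.not_nonempty_empty hne

lemma mapsTo_nonWanderingSet [TopologicalSpace X] {g : X → X} (hg : Continuous g) :
    MapsTo g (nonWanderingSet g) (nonWanderingSet g) := by
  intro x hx U hU
  obtain ⟨n, hn1, z, hz⟩ := hx (g ⁻¹' U) (hg.continuousAt.preimage_mem_nhds hU)
  obtain ⟨⟨w, hw1, hw2⟩, hz2⟩ := hz
  refine ⟨n, hn1, g z, ⟨g w, hw1, ?_⟩, hz2⟩
  rw [← hw2, ← Function.iterate_succ_apply g n w, ← Function.iterate_succ_apply' g n w]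

lemma nonWanderingSet_nonempty [MetricSpace X] [CompactSpace X] [Nonempty X] (g : X → X) :
    (nonWanderingSet g).Nonempty := by
  obtain ⟨x₀⟩ := ‹Nonempty X›
  obtain ⟨y, -, φ, hφ, hlim⟩ := isCompact_univ.tendsto_subseq
    (x := fun n => g^[n] x₀) (fun n => mem_univ _)
  refine ⟨y, fun U hU => ?_⟩
  have hev : ∀ᶠ n in atTop, g^[φ n] x₀ ∈ U := hlim (by exact hU)
  obtain ⟨M, hM⟩ := Filter.eventually_atTop.1 hev
  have hφlt : φ M < φ (M + 1) := hφ (Nat.lt_succ_self M)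
  refine ⟨φ (M + 1) - φ M, by omega, g^[φ (M + 1)] x₀, ⟨g^[φ M] x₀, hM M le_rfl, ?_⟩,
    hM (M + 1) (by omega)⟩
  rw [← Function.iterate_add_apply, Nat.sub_add_cancel hφlt.le]

lemma coverMincard_mono_set (T : X → X) {F G : Set X} (h : F ⊆ G) (U : Set (X × X)) (n : ℕ) :
    coverMincard T F U n ≤ coverMincard T G U n := by
  refine le_iInf₂ fun s hs => iInf₂_le s ?_
  exact h.trans hs

lemma coverEntropy_mono_set [UniformSpace X] (T : X → X) {F G : Set X} (h : F ⊆ G) :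
    coverEntropy T F ≤ coverEntropy T G := by
  refine iSup₂_mono fun U _ => ?_
  refine Filter.limsup_le_limsup (Filter.Eventually.of_forall fun n => ?_)
  refine EReal.monotone_div_right_of_nonneg (Nat.cast_nonneg' n) ?_
  exact ENNReal.log_monotone (ENat.toENNReal_mono (coverMincard_mono_set T h U n))

lemma ereal_le_of_forall_add {a : EReal} {b : ℝ}
    (h : ∀ δ : ℝ, 0 < δ → a ≤ ((b + δ : ℝ) : EReal)) : a ≤ (b : EReal) := by
  refine le_of_forall_gt_imp_ge_of_dense fun c hc => ?_
  induction c using EReal.rec with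
  | bot => exact absurd hc (by simp)
  | coe c =>
    have hbc : b < c := by exact_mod_cast hc
    calc a ≤ ((b + (c - b) : ℝ) : EReal) := h (c - b) (by linarith)
      _ = (c : EReal) := by norm_num
  | top => exact le_top

lemma elog_natCast (r : ℕ) (hr : 0 < r) :
    ENNReal.log (r : ℝ≥0∞) = ((Real.log r : ℝ) : EReal) := by
  rw [show ((r : ℝ≥0∞)) = ENNReal.ofReal (r : ℝ) by simp]
  rw [ENNReal.log_ofReal_of_pos (by exact_mod_cast hr)]

end NWEntropy

open Dynamics Set UniformSpace Uniformity Filter NWEntropy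
open scoped Classical ENNReal

set_option maxHeartbeats 2000000 in
/-- The topological entropy of a continuous selfmap of a compact metric space equals
the entropy of its restriction to the nonwandering set. -/
theorem coverEntropy_eq_coverEntropy_nonWanderingSet {X : Type*} [MetricSpace X]
    [CompactSpace X] (g : X → X) (hg : Continuous g) :
    Dynamics.coverEntropy g Set.univ = Dynamics.coverEntropy g (nonWanderingSet g) := by
  rcases isEmpty_or_nonempty X with hX | hX
  · rw [Set.univ_eq_empty_iff.2 hX, Set.eq_empty_of_isEmpty (nonWanderingSet g)]
  refine le_antisymm ?_ (coverEntropy_mono_set g (Set.subset_univ _))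
  set Ω := nonWanderingSet g with hΩdef
  have Ωne : Ω.Nonempty := nonWanderingSet_nonempty g
  have Ωcomp : IsCompact Ω := (isClosed_nonWanderingSet g).isCompact
  have Ωinv : MapsTo g Ω Ω := mapsTo_nonWanderingSet hg
  rw [coverEntropy_eq_iSup_basis Metric.uniformity_basis_dist g Set.univ]
  refine iSup₂_le fun ε₀ hε₀ => ?_
  by_cases htop : coverEntropy g Ω = ⊤
  · rw [htop]; exact le_top
  have h0 : (0 : EReal) ≤ coverEntropy g Ω := coverEntropy_nonneg g Ωne
  have hbot : coverEntropy g Ω ≠ ⊥ := fun h => by rw [h] at h0; exact absurd h0 (by simp)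
  set hR : ℝ := (coverEntropy g Ω).toReal with hhR
  have hcoe : coverEntropy g Ω = (hR : EReal) := (EReal.coe_toReal htop hbot).symm
  have hR0 : 0 ≤ hR := by rw [hcoe] at h0; exact_mod_cast h0
  rw [hcoe]
  refine ereal_le_of_forall_add fun δ hδ => ?_
  set δ' := δ / 5 with hδ'd
  have hδ' : 0 < δ' := by positivity
  set ε := ε₀ / 4 with hεd
  have hε : 0 < ε := by positivity
  set U₁ : Set (X × X) := {p | dist p.1 p.2 < ε} with hU₁d
  set U₂ : Set (X × X) := {p | dist p.1 p.2 < 2 * ε} with hU₂d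
  have hU₁uni : U₁ ∈ 𝓤 X := Metric.dist_mem_uniformity hε
  have hU₂symm : SetRel.IsSymm U₂ :=
    ⟨fun a b (h : dist a b < 2 * ε) => (show dist b a < 2 * ε by rwa [dist_comm])⟩
  -- Step A : a dynamical cover of Ω at a long time n₀, of controlled cardinality
  have hEnt1 : coverEntropyEntourage g Ω U₁ ≤ (hR : EReal) :=
    hcoe ▸ coverEntropyEntourage_le_coverEntropy g Ω hU₁uni
  have hlt : coverEntropyEntourage g Ω U₁ < ((hR + δ' : ℝ) : EReal) :=
    lt_of_le_of_lt hEnt1 (by exact_mod_cast (by linarith : hR < hR + δ'))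
  have hev : ∀ᶠ n : ℕ in atTop,
      ENNReal.log (coverMincard g Ω U₁ n) / (n : EReal) < ((hR + δ' : ℝ) : EReal) :=
    eventually_lt_of_limsup_lt hlt
  obtain ⟨M₀, hM₀⟩ := eventually_atTop.1 hev
  obtain ⟨M₁, hM₁⟩ := exists_nat_ge (Real.log 2 / δ')
  set n₀ := max (max M₀ 1) M₁ with hn₀d
  have hn₀1 : 1 ≤ n₀ := le_trans (le_max_right M₀ 1) (le_max_left _ _)
  have hlog2 : Real.log 2 ≤ n₀ * δ' := by
    rw [div_le_iff₀ hδ'] at hM₁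
    calc Real.log 2 ≤ M₁ * δ' := hM₁
      _ ≤ n₀ * δ' := by
        have : (M₁ : ℝ) ≤ n₀ := Nat.cast_le.2 (le_max_right _ _)
        nlinarith
  have hfin : coverMincard g Ω U₁ n₀ < ⊤ :=
    coverMincard_finite_of_isCompact_invariant Ωcomp Ωinv hU₁uni n₀
  obtain ⟨E, hEcov, hEcard⟩ := (coverMincard_finite_iff g Ω U₁ n₀).1 hfin
  set r := E.card with hrd
  have hr1 : 1 ≤ r := by
    have h1 := (one_le_coverMincard_iff g Ω U₁ n₀).2 Ωne
    rw [← hEcard] at h1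
    exact_mod_cast h1
  have hlogr : Real.log r ≤ n₀ * (hR + δ') := by
    have h1 := hM₀ n₀ (le_trans (le_max_left M₀ 1) (le_max_left _ _))
    rw [← hEcard] at h1
    rw [show ((((E.card : ℕ∞)) : ℝ≥0∞)) = ((r : ℕ) : ℝ≥0∞) from by
      rw [hrd]; exact_mod_cast ENat.toENNReal_coe E.card] at h1
    rw [elog_natCast r (by omega)] at h1
    have h2 := le_of_lt h1
    rw [EReal.div_le_iff_le_mul (by exact_mod_cast Nat.pos_of_ne_zero (by omega))
      (EReal.natCast_ne_top n₀)] at h2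
    have h4 : ((n₀ : EReal)) = (((n₀ : ℝ)) : EReal) := by norm_cast
    rw [h4, ← EReal.coe_mul, EReal.coe_le_coe_iff] at h2
    linarith [h2]
  have hlogr1 : Real.log (r + 1 : ℕ) ≤ n₀ * (hR + 2 * δ') := by
    have e1 : ((r + 1 : ℕ) : ℝ) ≤ 2 * r := by
      push_cast; have : (1 : ℝ) ≤ r := by exact_mod_cast hr1
      linarith
    calc Real.log (r + 1 : ℕ) ≤ Real.log (2 * r) :=
          Real.log_le_log (Nat.cast_pos.2 (Nat.succ_pos r)) e1
      _ = Real.log 2 + Real.log r := Real.log_mul (by norm_num)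
          ((by exact_mod_cast (by omega : (0 : ℕ) < r) : (0 : ℝ) < (r : ℝ)).ne')
      _ ≤ n₀ * δ' + n₀ * (hR + δ') := add_le_add hlog2 hlogr
      _ = n₀ * (hR + 2 * δ') := by ring
  -- Step B : the wandering covering of the complement
  set D := dynEntourage g U₁ n₀ with hDd
  set V := ⋃ y ∈ E, ball y D with hVd
  have hU₁open : IsOpen U₁ := isOpen_lt continuous_dist continuous_const
  have hDopen : IsOpen D := isOpen.dynEntourage hg hU₁open n₀
  have hVopen : IsOpen V := isOpen_biUnion fun y _ =>
    hDopen.preimage (continuous_const.prodMk continuous_id)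
  have hΩV : Ω ⊆ V := by
    intro z hz
    have h1 := hEcov hz
    obtain ⟨y, hy, hzy⟩ := h1
    rw [hVd, mem_iUnion₂]
    refine ⟨y, hy, ?_⟩
    simp only [hDd, ball, mem_preimage, mem_dynEntourage]
    rw [mem_dynEntourage] at hzy
    intro k hk
    have := hzy k hk
    simp only [hU₁d, mem_setOf_eq] at this ⊢
    rw [dist_comm]; exact this
  have hKcomp : IsCompact Vᶜ := hVopen.isClosed_compl.isCompact
  have hwander : ∀ z : X, ∃ Wz : Set X, IsOpen Wz ∧
      (z ∉ V → z ∈ Wz ∧ Wz ⊆ Metric.ball z ε ∧ ∀ n, 1 ≤ n → g^[n] '' Wz ∩ Wz = ∅) := by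
    intro z
    by_cases hz : z ∈ V
    · exact ⟨∅, isOpen_empty, fun h => absurd hz h⟩
    · have hzΩ : z ∉ Ω := fun h => hz (hΩV h)
      have h1 : ¬ ∀ U ∈ nhds z, ∃ n, 1 ≤ n ∧ (g^[n] '' U ∩ U).Nonempty := hzΩ
      push_neg at h1
      obtain ⟨U, hU, hn⟩ := h1
      refine ⟨interior U ∩ Metric.ball z ε, isOpen_interior.inter Metric.isOpen_ball,
        fun _ => ⟨⟨mem_interior_iff_mem_nhds.2 hU, Metric.mem_ball_self hε⟩,
          inter_subset_right, fun n hn1 => ?_⟩⟩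
      rw [← subset_empty_iff, ← hn n hn1]
      exact inter_subset_inter
        (image_mono (inter_subset_left.trans interior_subset))
        (inter_subset_left.trans interior_subset)
  choose Wf hWopen hWspec using hwander
  obtain ⟨t, htmem, htcov⟩ := hKcomp.elim_nhds_subcover Wf
    (fun z hz => (hWopen z).mem_nhds ((hWspec z hz).1))
  set q := t.card with hqd
  set W : Fin q → Set X := fun i => Wf ((t.equivFin.symm i : X)) with hWd
  have hWU : ∀ (i : Fin q) (a b : X), a ∈ W i → b ∈ W i → (a, b) ∈ U₂ := by
    intro i a b ha hb
    set z := (t.equivFin.symm i : X) with hzd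
    have hzK : z ∈ Vᶜ := htmem z (t.equivFin.symm i).2
    have hsub := (hWspec z hzK).2.1
    have h1 := hsub ha
    have h2 := hsub hb
    rw [Metric.mem_ball] at h1 h2
    rw [hU₂d]
    simp only [mem_setOf_eq]
    calc dist a b ≤ dist a z + dist z b := dist_triangle a z b
      _ < ε + ε := by rw [dist_comm z b]; exact add_lt_add h1 h2
      _ = 2 * ε := by ring
  have hWcov : ∀ z : X, z ∉ ⋃ y ∈ E, ball y (dynEntourage g U₁ n₀) → ∃ i, z ∈ W i := by
    intro z hz
    have hzK : z ∈ Vᶜ := by rw [hVd, hDd]; exact hz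
    have h1 := htcov hzK
    rw [mem_iUnion₂] at h1
    obtain ⟨x, hxt, hzW⟩ := h1
    refine ⟨t.equivFin ⟨x, hxt⟩, ?_⟩
    rw [hWd]
    simpa using hzW
  have hWwander : ∀ (i : Fin q) (x : X) (τ τ' : ℕ), τ < τ' →
      g^[τ] x ∈ W i → g^[τ'] x ∉ W i := by
    intro i x τ τ' hττ h1 h2
    set z := (t.equivFin.symm i : X) with hzd
    have hzK : z ∈ Vᶜ := htmem z (t.equivFin.symm i).2
    have hemp := (hWspec z hzK).2.2 (τ' - τ) (by omega)
    have : g^[τ'] x ∈ g^[τ' - τ] '' (Wf z) ∩ Wf z := by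
      refine ⟨⟨g^[τ] x, h1, ?_⟩, h2⟩
      rw [← Function.iterate_add_apply, Nat.sub_add_cancel hττ.le]
    rw [hemp] at this
    exact this
  have hUU : ∀ a b c : X, (a, b) ∈ U₁ → (a, c) ∈ U₁ → (b, c) ∈ U₂ := by
    intro a b c h1 h2
    rw [hU₁d] at h1 h2
    rw [hU₂d]
    simp only [mem_setOf_eq] at *
    calc dist b c ≤ dist b a + dist a c := dist_triangle b a c
      _ < ε + ε := by rw [dist_comm b a]; exact add_lt_add h1 h2
      _ = 2 * ε := by ring
  -- Step C : choice of the time horizon N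
  have hC1 : ∃ N₁ : ℕ, ∀ N : ℕ, N₁ ≤ N → (q : ℝ) * Real.log (N + 1) ≤ δ' * N := by
    have hc : (0 : ℝ) < δ' / (2 * (q + 1)) := by
      have : (0 : ℝ) ≤ q := Nat.cast_nonneg q
      exact div_pos hδ' (by linarith)
    have hlo := (Real.isLittleO_log_id_atTop.def hc)
    rw [Filter.eventually_atTop] at hlo
    obtain ⟨x₀, hx₀⟩ := hlo
    obtain ⟨N₁, hN₁⟩ := exists_nat_ge x₀
    refine ⟨max N₁ 1, fun N hN => ?_⟩
    have hN1 : 1 ≤ N := le_trans (le_max_right N₁ 1) hN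
    have hNx₀ : x₀ ≤ (N + 1 : ℝ) := by
      have h1 : (N₁ : ℝ) ≤ N := Nat.cast_le.2 (le_trans (le_max_left N₁ 1) hN)
      linarith
    have h2 := hx₀ (N + 1 : ℝ) hNx₀
    simp only [Real.norm_eq_abs, id] at h2
    have h3 : Real.log (N + 1) ≤ δ' / (2 * (q + 1)) * (N + 1) := by
      have := le_abs_self (Real.log (N + 1))
      have habs : |(N + 1 : ℝ)| = (N + 1 : ℝ) := abs_of_pos (by positivity)
      rw [habs] at h2
      linarith
    have h4 : (N + 1 : ℝ) ≤ 2 * N := by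
      have : (1 : ℝ) ≤ N := by exact_mod_cast hN1
      linarith
    have h5 : Real.log (N + 1) ≤ δ' / (2 * (q + 1)) * (2 * N) := by
      have := mul_le_mul_of_nonneg_left h4 (le_of_lt hc)
      linarith
    calc (q : ℝ) * Real.log (N + 1) ≤ (q + 1 : ℝ) * Real.log (N + 1) := by
          have hlog0 : 0 ≤ Real.log (N + 1) := Real.log_nonneg (by push_cast; linarith)
          nlinarith
      _ ≤ (q + 1 : ℝ) * (δ' / (2 * (q + 1)) * (2 * N)) := by
          have hq0 : (0 : ℝ) ≤ q + 1 := by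
            have : (0 : ℝ) ≤ q := Nat.cast_nonneg q
            linarith
          nlinarith [h5]
      _ = δ' * N := by field_simp
  obtain ⟨N₁, hN₁⟩ := hC1
  obtain ⟨N₂, hN₂⟩ := exists_nat_ge
    (((q : ℝ) * Real.log (q + 1 : ℕ) + (q + 1 : ℝ) * Real.log (r + 1 : ℕ)) / δ')
  set N := max (max N₁ 1) N₂ with hNd
  have hN1 : 1 ≤ N := le_trans (le_max_right N₁ 1) (le_max_left _ _)
  have hc1 := hN₁ N (le_trans (le_max_left N₁ 1) (le_max_left _ _))
  have hc2 : (q : ℝ) * Real.log (q + 1 : ℕ) + (q + 1 : ℝ) * Real.log (r + 1 : ℕ) ≤ δ' * N := by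
    rw [div_le_iff₀ hδ'] at hN₂
    have : (N₂ : ℝ) ≤ N := Nat.cast_le.2 (le_max_right _ _)
    nlinarith
  -- The cover of the whole space
  obtain ⟨s, hscov, hscard⟩ := exists_dynCover_of_wandering g hn₀1 E W hUU hWU hWcov hWwander N
  have hent := hscov.coverEntropyEntourage_le_log_card_div (mapsTo_univ g Set.univ)
    (show N ≠ 0 by omega)
  have hs1 : 1 ≤ s.card := by
    have := hscov.nonempty (Set.univ_nonempty)
    rcases this with ⟨x, hx⟩
    exact Finset.card_pos.2 ⟨x, hx⟩
  -- The cardinality estimate, in real logarithms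
  set B := N / n₀ + q + 1 with hBd
  have hlogcard : Real.log s.card ≤ N * (hR + δ) := by
    have hb1 : Real.log s.card ≤ Real.log ((N + 1) ^ q * (q + 1) ^ q * (r + 1) ^ B : ℕ) := by
      apply Real.log_le_log (by exact_mod_cast hs1)
      exact_mod_cast hscard
    have hb2 : Real.log ((N + 1) ^ q * (q + 1) ^ q * (r + 1) ^ B : ℕ)
        = q * Real.log (N + 1 : ℕ) + q * Real.log (q + 1 : ℕ) + B * Real.log (r + 1 : ℕ) := by
      push_cast
      have hN0 : ((N : ℝ) + 1) ≠ 0 := ne_of_gt (by have := (Nat.cast_nonneg N : (0 : ℝ) ≤ N); linarith)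
      have hq0 : ((q : ℝ) + 1) ≠ 0 := ne_of_gt (by have := (Nat.cast_nonneg q : (0 : ℝ) ≤ q); linarith)
      have hr0 : ((r : ℝ) + 1) ≠ 0 := ne_of_gt (by have := (Nat.cast_nonneg r : (0 : ℝ) ≤ r); linarith)
      rw [Real.log_mul (mul_ne_zero (pow_ne_zero _ hN0) (pow_ne_zero _ hq0)) (pow_ne_zero _ hr0),
        Real.log_mul (pow_ne_zero _ hN0) (pow_ne_zero _ hq0),
        Real.log_pow, Real.log_pow, Real.log_pow]
    have hb3 : (B : ℝ) * Real.log (r + 1 : ℕ)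
        ≤ (N : ℝ) * (hR + 2 * δ') + (q + 1 : ℝ) * Real.log (r + 1 : ℕ) := by
      have hBsplit : (B : ℝ) = (N / n₀ : ℕ) + q + 1 := by rw [hBd]; push_cast; ring
      have hlog0 : 0 ≤ Real.log (r + 1 : ℕ) := Real.log_nonneg (by push_cast; linarith)
      have hdiv : ((N / n₀ : ℕ) : ℝ) * Real.log (r + 1 : ℕ) ≤ (N : ℝ) * (hR + 2 * δ') := by
        calc ((N / n₀ : ℕ) : ℝ) * Real.log (r + 1 : ℕ)
            ≤ ((N / n₀ : ℕ) : ℝ) * (n₀ * (hR + 2 * δ')) := by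
              have h0 : (0 : ℝ) ≤ ((N / n₀ : ℕ) : ℝ) := by positivity
              nlinarith [hlogr1]
          _ = (((N / n₀) * n₀ : ℕ) : ℝ) * (hR + 2 * δ') := by push_cast; ring
          _ ≤ (N : ℝ) * (hR + 2 * δ') := by
              have h1 : ((N / n₀) * n₀ : ℕ) ≤ N := Nat.div_mul_le_self N n₀
              have h2 : (0 : ℝ) ≤ hR + 2 * δ' := by linarith
              have h3 : (((N / n₀) * n₀ : ℕ) : ℝ) ≤ (N : ℝ) := Nat.cast_le.2 h1
              nlinarith
      rw [hBsplit]
      nlinarith [hdiv, hlog0]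
    have hlogN : Real.log (N + 1 : ℕ) = Real.log ((N : ℝ) + 1) := by norm_cast
    calc Real.log s.card
        ≤ q * Real.log (N + 1 : ℕ) + q * Real.log (q + 1 : ℕ) + B * Real.log (r + 1 : ℕ) := by
          rw [← hb2]; exact hb1
      _ ≤ δ' * N + (q * Real.log (q + 1 : ℕ) + (q + 1) * Real.log (r + 1 : ℕ))
          + (N : ℝ) * (hR + 2 * δ') := by
          rw [hlogN] at *
          nlinarith [hc1, hb3]
      _ ≤ δ' * N + δ' * N + (N : ℝ) * (hR + 2 * δ') := by nlinarith [hc2]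
      _ = (N : ℝ) * (hR + 4 * δ') := by ring
      _ ≤ N * (hR + δ) := by
          have : (0 : ℝ) ≤ (N : ℝ) := by positivity
          have h4 : hR + 4 * δ' ≤ hR + δ := by rw [hδ'd]; linarith
          nlinarith
  -- Conclude
  have hfinal : ENNReal.log (s.card : ℝ≥0∞) / (N : EReal) ≤ ((hR + δ : ℝ) : EReal) := by
    rw [elog_natCast s.card (by omega)]
    rw [EReal.div_le_iff_le_mul (by exact_mod_cast Nat.pos_of_ne_zero (by omega))
      (EReal.natCast_ne_top N)]
    have h1 : Real.log s.card ≤ (N : ℝ) * (hR + δ) := by linarith [hlogcard]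
    have h4 : ((N : EReal)) = (((N : ℝ)) : EReal) := by norm_cast
    rw [h4, ← EReal.coe_mul, EReal.coe_le_coe_iff]
    exact h1
  have hsub : SetRel.comp U₂ U₂ ⊆ {p : X × X | dist p.1 p.2 < ε₀} := by
    rintro ⟨a, c⟩ ⟨b, h1, h2⟩
    rw [hU₂d] at h1 h2
    simp only [mem_setOf_eq] at h1 h2 ⊢
    calc dist a c ≤ dist a b + dist b c := dist_triangle a b c
      _ < 2 * ε + 2 * ε := add_lt_add h1 h2
      _ = ε₀ := by rw [show ε = ε₀ / 4 from rfl]; ring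
  calc coverEntropyEntourage g Set.univ {p : X × X | dist p.1 p.2 < ε₀}
      ≤ coverEntropyEntourage g Set.univ (SetRel.comp U₂ U₂) :=
        coverEntropyEntourage_antitone g Set.univ hsub
    _ ≤ ENNReal.log (s.card : ℝ≥0∞) / (N : EReal) := hent
    _ ≤ ((hR + δ : ℝ) : EReal) := hfinal
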